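/- arXiv:2109.07186 — 2 statements merged into one kernel-verified Lean document; each statement's English description precedes it below -/
import Mathlib

section
/- Let W = ℤ/2 ∗ ℤ/2 ∗ ℤ/2 be the free product of three copies of the cyclic group of order 2, with canonical generators a₁, a₂, a₃ (the images of the nontrivial elements of the three factors). Let Y be the graph with vertex set W in which two distinct elements x, y are adjacent if and only if x⁻¹y belongs to ⟨a₁,a₂⟩ ∪ ⟨a₂,a₃⟩ ∪ ⟨a₁,a₃⟩ (the union of the three subgroups generated by two of the generators). Then Y is connected and has infinite diameter: for every n ∈ ℕ there exists g ∈ W whose graph-distance in Y from the identity is greater than n. In particular, the elements (a₁a₂a₃)^k, k ∈ ℕ, are at unbounded distance from the identity in Y. -/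
/-- The cyclic group of order 2, written multiplicatively. -/
abbrev Z2 : Type := Multiplicative (ZMod 2)

/-- The free product `W = ℤ/2 ∗ ℤ/2 ∗ ℤ/2`. -/
abbrev W : Type := Monoid.CoprodI (fun _ : Fin 3 => Z2)

/-- The canonical generators of `W`: the images of the nontrivial elements of the three
free factors. -/
def gen (i : Fin 3) : W :=
  Monoid.CoprodI.of (M := fun _ : Fin 3 => Z2) (i := i) (Multiplicative.ofAdd 1)

/-- The union of the three subgroups generated by two of the generators. -/
def S : Set W :=
  ↑(Subgroup.closure {gen 0, gen 1}) ∪ ↑(Subgroup.closure {gen 1, gen 2}) ∪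
    ↑(Subgroup.closure {gen 0, gen 2})

/-- The cone-off graph: vertices are elements of `W`, and two distinct elements `x, y`
are adjacent exactly when `x⁻¹y` lies in one of the three dihedral subgroups. -/
def Y : SimpleGraph W := SimpleGraph.fromRel (fun x y => x⁻¹ * y ∈ S)


/-! Combinatorial part: reduced words over `Fin 3`. -/

/-- One-step left multiplication by generator `i` on a reduced word. -/
def sig (i : Fin 3) : List (Fin 3) → List (Fin 3)
  | [] => [i]
  | a :: t => if a = i then t else i :: a :: t

/-- `red U M` is the reduction of the concatenation `U ++ M`. -/
def red (U M : List (Fin 3)) : List (Fin 3) := List.foldr sig M U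

/-- Count of "full triples" in a word. -/
def T : List (Fin 3) → ℕ
  | a :: b :: c :: t => (if a ≠ b ∧ b ≠ c ∧ a ≠ c then 1 else 0) + T (b :: c :: t)
  | _ => 0

lemma sig_chain (i : Fin 3) {L : List (Fin 3)} (h : L.Chain' (· ≠ ·)) :
    (sig i L).Chain' (· ≠ ·) := by
  match L with
  | [] => exact List.isChain_singleton _
  | a :: t =>
    rw [sig]
    split
    · exact h.tail
    · exact List.isChain_cons_cons.2 ⟨fun h' => by simp_all, h⟩

lemma sig_sig (i : Fin 3) {L : List (Fin 3)} (h : L.Chain' (· ≠ ·)) :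
    sig i (sig i L) = L := by
  match L with
  | [] => simp [sig]
  | a :: t =>
    rw [sig]
    split
    · subst ‹a = i›
      match t, h with
      | [], _ => simp [sig]
      | b :: t', h =>
        have hb : a ≠ b := (List.isChain_cons_cons.1 h).1
        simp [sig, hb.symm]
    · simp [sig, ‹¬ a = i›]

lemma T_cons_le (a : Fin 3) (L : List (Fin 3)) : T (a :: L) ≤ T L + 1 := by
  match L with
  | [] => simp [T]
  | [b] => simp [T]
  | b :: c :: t =>
    rw [T]
    split <;> omega

lemma T_le_append (A B : List (Fin 3)) : T A ≤ T (A ++ B) := by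
  induction A with
  | nil => exact Nat.zero_le _
  | cons a A ih =>
    match A, ih with
    | [], _ => exact Nat.zero_le _
    | [b], _ => exact Nat.zero_le _
    | b :: c :: t, ih =>
      show T (a :: b :: c :: t) ≤ T (a :: b :: c :: (t ++ B))
      rw [T, T]
      exact Nat.add_le_add_left ih _

lemma T_append_le (A B : List (Fin 3)) : T (A ++ B) ≤ T A + T B + 2 := by
  induction A with
  | nil =>
    have h0 : T ([] : List (Fin 3)) = 0 := rfl
    rw [List.nil_append, h0]; omega
  | cons a A ih =>
    match A, ih with
    | [], _ =>
      have := T_cons_le a B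
      simp only [List.nil_append, List.cons_append, T]
      omega
    | [b], _ =>
      have h1 := T_cons_le b B
      have h2 := T_cons_le a (b :: B)
      show T (a :: b :: B) ≤ T [a, b] + T B + 2
      simp only [T] at *
      omega
    | b :: c :: t, ih =>
      show T (a :: b :: c :: (t ++ B)) ≤ T (a :: b :: c :: t) + T B + 2
      rw [T, T]
      have : T (b :: c :: (t ++ B)) ≤ T (b :: c :: t) + T B + 2 := ih
      omega

lemma T_prefix_le {A L : List (Fin 3)} (h : A <+: L) : T A ≤ T L := by
  obtain ⟨C, rfl⟩ := h
  exact T_le_append A C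

lemma T_alt {i j : Fin 3} {B : List (Fin 3)} (h : ∀ x ∈ B, x = i ∨ x = j) : T B = 0 := by
  induction B with
  | nil => rfl
  | cons a B ih =>
    have ihB := ih (fun x hx => h x (List.mem_cons_of_mem a hx))
    match B, ihB with
    | [], _ => rfl
    | [b], _ => rfl
    | b :: c :: t, ihB =>
      rw [T]
      have ha := h a (by simp)
      have hb := h b (by simp)
      have hc := h c (by simp)
      have : ¬ (a ≠ b ∧ b ≠ c ∧ a ≠ c) := by
        rcases ha with rfl|rfl <;> rcases hb with rfl|rfl <;> rcases hc with rfl|rfl <;> tauto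
      rw [if_neg this]
      simpa using ihB

lemma sig_cons_of {i : Fin 3} {L : List (Fin 3)} (h : ∀ b ∈ L.head?, b ≠ i) :
    sig i L = i :: L := by
  match L with
  | [] => rfl
  | a :: t => exact if_neg (h a rfl)

lemma red_nil {U : List (Fin 3)} (h : U.Chain' (· ≠ ·)) : red U [] = U := by
  induction U with
  | nil => rfl
  | cons t U₀ ih =>
    have h' := List.isChain_cons.1 h
    show sig t (red U₀ []) = t :: U₀
    rw [ih h'.2]
    exact sig_cons_of (fun b hb => (h'.1 b hb).symm)

lemma red_append (U₁ U₂ M : List (Fin 3)) : red (U₁ ++ U₂) M = red U₁ (red U₂ M) :=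
  List.foldr_append ..

lemma red_singleton (s : Fin 3) (M : List (Fin 3)) : red [s] M = sig s M := rfl

lemma red_alt {i j : Fin 3} {U M : List (Fin 3)} (hU : ∀ x ∈ U, x = i ∨ x = j)
    (hM : ∀ x ∈ M, x = i ∨ x = j) : ∀ x ∈ red U M, x = i ∨ x = j := by
  induction U with
  | nil => exact hM
  | cons t U₀ ih =>
    have ih' := ih (fun x hx => hU x (List.mem_cons_of_mem t hx))
    show ∀ x ∈ sig t (red U₀ M), _
    have ht := hU t (by simp)
    match h : red U₀ M with
    | [] => intro x hx; simp [sig] at hx; subst hx; exact ht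
    | a :: t' =>
      rw [sig]
      split
      · intro x hx; exact ih' x (h ▸ List.mem_cons_of_mem a hx)
      · intro x hx
        rw [List.mem_cons] at hx
        rcases hx with rfl | hx
        · exact ht
        · exact ih' x (h ▸ hx)

lemma red_decomp {i j : Fin 3} : ∀ (n : ℕ) (M U : List (Fin 3)), M.length ≤ n →
    M.Chain' (· ≠ ·) → U.Chain' (· ≠ ·) → (∀ x ∈ M, x = i ∨ x = j) →
    ∃ A B, red U M = A ++ B ∧ A <+: U ∧ ∀ x ∈ B, x = i ∨ x = j := by
  intro n
  induction n with
  | zero =>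
    intro M U hlen _ hU _
    have : M = [] := List.eq_nil_of_length_eq_zero (Nat.le_zero.1 hlen)
    subst this
    exact ⟨U, [], by rw [red_nil hU, List.append_nil], List.prefix_refl U, by simp⟩
  | succ n ih =>
    intro M U hlen hM hU halt
    match M with
    | [] =>
      exact ⟨U, [], by rw [red_nil hU, List.append_nil], List.prefix_refl U, by simp⟩
    | s :: M₀ =>
      have hs : s = i ∨ s = j := halt s (by simp)
      have hM' := List.isChain_cons.1 hM
      have hM₀alt : ∀ x ∈ M₀, x = i ∨ x = j := fun x hx => halt x (List.mem_cons_of_mem s hx)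
      have hlen₀ : M₀.length ≤ n := by simpa using hlen
      rcases U.eq_nil_or_concat with rfl | ⟨U₀, b, hc⟩
      · exact ⟨[], s :: M₀, rfl, List.nil_prefix, halt⟩
      rw [List.concat_eq_append] at hc
      subst hc
      have hU₀ : U₀.Chain' (· ≠ ·) := (List.isChain_append.1 hU).1
      by_cases hb : b = s
      · subst hb
        have key : red (U₀ ++ [b]) (b :: M₀) = red U₀ M₀ := by
          rw [red_append, red_singleton]
          congr 1
          simp [sig]
        rw [key]
        obtain ⟨A, B, hE, hpre, hB⟩ := ih M₀ U₀ hlen₀ hM'.2 hU₀ hM₀alt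
        exact ⟨A, B, hE, hpre.trans (List.prefix_append U₀ [b]), hB⟩
      · have key : red (U₀ ++ [b]) (s :: M₀) = red ((U₀ ++ [b]) ++ [s]) M₀ := by
          rw [red_append (U₀ ++ [b]) [s], red_singleton]
          congr 1
          exact (sig_cons_of (fun c hc => (hM'.1 c hc).symm)).symm
        have hU' : ((U₀ ++ [b]) ++ [s]).Chain' (· ≠ ·) := by
          refine List.isChain_append.2 ⟨hU, List.isChain_singleton s, ?_⟩
          intro x hx y hy
          rw [List.getLast?_concat] at hx
          simp only [List.head?_cons, Option.mem_some_iff] at hx hy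
          subst hx; subst hy
          exact hb
        rw [key]
        obtain ⟨A, B, hE, hpre, hB⟩ := ih M₀ ((U₀ ++ [b]) ++ [s]) hlen₀ hM'.2 hU' hM₀alt
        by_cases hlA : A.length ≤ (U₀ ++ [b]).length
        · exact ⟨A, B, hE,
            List.prefix_of_prefix_length_le hpre (List.prefix_append _ [s]) hlA, hB⟩
        · have hAeq : A = (U₀ ++ [b]) ++ [s] := by
            refine List.IsPrefix.eq_of_length hpre ?_
            have h1 := hpre.length_le
            have h2 : ¬ A.length ≤ (U₀ ++ [b]).length := hlA
            simp only [List.length_append, List.length_cons, List.length_nil] at h1 h2 ⊢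
            omega
          subst hAeq
          refine ⟨U₀ ++ [b], s :: B, by rw [hE]; simp, List.prefix_refl _, ?_⟩
          intro x hx
          rw [List.mem_cons] at hx
          rcases hx with rfl | hx
          · exact hs
          · exact hB x hx


abbrev X : Type := {L : List (Fin 3) // L.Chain' (· ≠ ·)}

def sigX (i : Fin 3) (x : X) : X := ⟨sig i x.1, sig_chain i x.2⟩

lemma sigX_invol (i : Fin 3) : Function.Involutive (sigX i) :=
  fun x => Subtype.ext (sig_sig i x.2)

def permX (i : Fin 3) : Equiv.Perm X := Function.Involutive.toPerm (sigX i) (sigX_invol i)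

lemma permX_apply (i : Fin 3) (x : X) : permX i x = sigX i x := rfl

lemma permX_sq (i : Fin 3) : permX i * permX i = 1 :=
  Equiv.ext fun x => by
    show permX i (permX i x) = x
    rw [permX_apply, permX_apply]
    exact sigX_invol i x

def psi (i : Fin 3) : Z2 →* Equiv.Perm X where
  toFun m := if m = 1 then 1 else permX i
  map_one' := if_pos rfl
  map_mul' a b := by
    rcases (by decide : ∀ m : Z2, m = 1 ∨ m = Multiplicative.ofAdd 1) a with rfl | rfl <;>
      rcases (by decide : ∀ m : Z2, m = 1 ∨ m = Multiplicative.ofAdd 1) b with rfl | rfl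
    · simp
    · simp
    · simp
    · show (if ((Multiplicative.ofAdd (1 : ZMod 2)) * Multiplicative.ofAdd 1) = 1 then 1
          else permX i) = (if (Multiplicative.ofAdd (1 : ZMod 2)) = 1 then 1 else permX i) *
          (if (Multiplicative.ofAdd (1 : ZMod 2)) = 1 then 1 else permX i)
      rw [show (Multiplicative.ofAdd (1 : ZMod 2)) * Multiplicative.ofAdd 1 = 1 from by decide,
        if_pos rfl, if_neg (show ¬(Multiplicative.ofAdd (1 : ZMod 2)) = 1 from by decide),
        permX_sq]

def phi : W →* Equiv.Perm X := Monoid.CoprodI.lift psi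

lemma phi_gen (i : Fin 3) : phi (gen i) = permX i := by
  rw [gen, phi, Monoid.CoprodI.lift_of]
  show (if (Multiplicative.ofAdd (1 : ZMod 2)) = 1 then 1 else permX i) = permX i
  exact if_neg (show ¬(Multiplicative.ofAdd (1 : ZMod 2)) = 1 from by decide)

def emptyX : X := ⟨[], List.isChain_nil⟩

def NF (g : W) : X := phi g emptyX

lemma gen_sq (i : Fin 3) : gen i * gen i = 1 := by
  rw [gen, ← map_mul,
    show (Multiplicative.ofAdd (1 : ZMod 2)) * Multiplicative.ofAdd 1 = 1 from by decide,
    map_one]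

lemma recon (g : W) : ∀ x : X, ((phi g x).1.map gen).prod = g * ((x.1.map gen).prod) := by
  induction g using Monoid.CoprodI.induction_on with
  | one => intro x; rw [map_one]; simp
  | of i m =>
    intro x
    rcases (by decide : ∀ m : Z2, m = 1 ∨ m = Multiplicative.ofAdd 1) m with rfl | rfl
    · rw [map_one, map_one]; simp
    · show ((phi (gen i) x).1.map gen).prod = gen i * _
      rw [phi_gen]
      show ((sig i x.1).map gen).prod = gen i * ((x.1.map gen).prod)
      obtain ⟨L, hL⟩ := x
      match L with
      | [] => simp [sig]
      | a :: t =>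
        rw [sig]
        split
        · subst ‹a = i›
          rw [List.map_cons, List.prod_cons, ← mul_assoc, gen_sq, one_mul]
        · rw [List.map_cons, List.map_cons, List.prod_cons, List.prod_cons]
  | mul g₁ g₂ ih₁ ih₂ =>
    intro x
    rw [map_mul]
    show ((phi g₁ (phi g₂ x)).1.map gen).prod = _
    rw [ih₁, ih₂, mul_assoc]

lemma g_eq (g : W) : (((NF g).1.map gen).prod) = g := by
  simpa [NF, emptyX] using recon g emptyX

lemma phi_apply (g : W) (x : X) : (phi g x).1 = red (NF g).1 x.1 := by
  conv_lhs => rw [← g_eq g]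
  generalize (NF g).1 = U
  induction U with
  | nil => rw [show ((List.map gen []).prod : W) = 1 from by simp, map_one]; rfl
  | cons t U₀ ih =>
    rw [List.map_cons, List.prod_cons, map_mul]
    show (phi (gen t) (phi ((U₀.map gen).prod) x)).1 = sig t (red U₀ x.1)
    rw [phi_gen]
    show (sigX t (phi ((U₀.map gen).prod) x)).1 = sig t (red U₀ x.1)
    show sig t (phi ((U₀.map gen).prod) x).1 = sig t (red U₀ x.1)
    rw [ih]

lemma NF_mul (a b : W) : (NF (a * b)).1 = red (NF a).1 (NF b).1 := by
  show (phi (a * b) emptyX).1 = _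
  rw [map_mul]
  exact phi_apply a (NF b)

lemma NF_one : (NF 1).1 = [] := by
  show (phi 1 emptyX).1 = []
  rw [map_one]; rfl

lemma NF_gen (i : Fin 3) : (NF (gen i)).1 = [i] := by
  show (phi (gen i) emptyX).1 = [i]
  rw [phi_gen]; rfl

lemma gen_inv (i : Fin 3) : (gen i)⁻¹ = gen i := inv_eq_of_mul_eq_one_right (gen_sq i)

lemma NF_alt {i j : Fin 3} {h : W} (hh : h ∈ Subgroup.closure {gen i, gen j}) :
    ∀ x ∈ (NF h).1, x = i ∨ x = j := by
  refine (Subgroup.closure_induction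
    (p := fun g _ => (∀ x ∈ (NF g).1, x = i ∨ x = j) ∧ (∀ x ∈ (NF g⁻¹).1, x = i ∨ x = j))
    ?_ ?_ ?_ ?_ hh).1
  · intro x hx
    rcases hx with rfl | rfl
    · rw [gen_inv, NF_gen]
      exact ⟨by simp, by simp⟩
    · rw [gen_inv, NF_gen]
      exact ⟨by simp, by simp⟩
  · exact ⟨by rw [NF_one]; simp, by rw [inv_one, NF_one]; simp⟩
  · intro a b _ _ ha hb
    constructor
    · rw [NF_mul]
      exact red_alt ha.1 hb.1
    · rw [mul_inv_rev, NF_mul]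
      exact red_alt hb.2 ha.2
  · intro a _ ha
    exact ⟨ha.2, by rw [inv_inv]; exact ha.1⟩


lemma mem_S_closure {h : W} (hS : h ∈ S) :
    ∃ i j : Fin 3, h ∈ Subgroup.closure {gen i, gen j} := by
  rcases hS with (h1 | h1) | h1
  · exact ⟨0, 1, h1⟩
  · exact ⟨1, 2, h1⟩
  · exact ⟨0, 2, h1⟩

lemma edge_T {x y : W} (hadj : Y.Adj x y) : T (NF y).1 ≤ T (NF x).1 + 2 := by
  rw [Y, SimpleGraph.fromRel_adj] at hadj
  obtain ⟨hne, hS⟩ := hadj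
  have hmem : ∃ i j : Fin 3, x⁻¹ * y ∈ Subgroup.closure {gen i, gen j} := by
    rcases hS with hS | hS
    · exact mem_S_closure hS
    · obtain ⟨i, j, hm⟩ := mem_S_closure hS
      refine ⟨i, j, ?_⟩
      have := inv_mem hm
      rwa [mul_inv_rev, inv_inv] at this
  obtain ⟨i, j, hm⟩ := hmem
  have hy : (NF y).1 = red (NF x).1 (NF (x⁻¹ * y)).1 := by
    rw [← NF_mul, mul_inv_cancel_left]
  obtain ⟨A, B, hE, hpre, hB⟩ := red_decomp (i := i) (j := j) (NF (x⁻¹ * y)).1.length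
    (NF (x⁻¹ * y)).1 (NF x).1 le_rfl (NF (x⁻¹ * y)).2 (NF x).2 (NF_alt hm)
  calc T (NF y).1 = T (A ++ B) := by rw [hy, hE]
    _ ≤ T A + T B + 2 := T_append_le A B
    _ ≤ T (NF x).1 + 0 + 2 :=
        Nat.add_le_add (Nat.add_le_add (T_prefix_le hpre) (T_alt hB).le) le_rfl
    _ = T (NF x).1 + 2 := by omega

lemma walk_T {x y : W} (p : Y.Walk x y) : T (NF y).1 ≤ T (NF x).1 + 2 * p.length := by
  induction p with
  | nil => simp
  | @cons a b c h p ih =>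
    have := edge_T h
    rw [SimpleGraph.Walk.length_cons]
    omega

lemma gen_ne_one (i : Fin 3) : gen i ≠ 1 := by
  intro h
  have h1 : permX i = 1 := by rw [← phi_gen, h, map_one]
  have h2 : sig i [] = ([] : List (Fin 3)) := congrArg (fun p : Equiv.Perm X => (p emptyX).1) h1
  simp [sig] at h2

lemma gen_mem_S (t : Fin 3) : gen t ∈ S := by
  fin_cases t
  · exact Or.inl (Or.inl (Subgroup.subset_closure (by simp)))
  · exact Or.inl (Or.inl (Subgroup.subset_closure (by simp)))
  · exact Or.inl (Or.inr (Subgroup.subset_closure (by simp)))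

lemma adj_mul_gen (x : W) (t : Fin 3) : Y.Adj x (x * gen t) := by
  rw [Y, SimpleGraph.fromRel_adj]
  refine ⟨fun h => gen_ne_one t (left_eq_mul.mp h), Or.inl ?_⟩
  rw [inv_mul_cancel_left]
  exact gen_mem_S t

lemma reach (g : W) : Y.Reachable 1 g := by
  conv_rhs => rw [← g_eq g]
  generalize (NF g).1 = l
  induction l using List.reverseRecOn with
  | nil =>
    simp only [List.map_nil, List.prod_nil]
    exact SimpleGraph.Reachable.refl 1
  | append_singleton l t ih =>
    rw [List.map_append, List.prod_append]
    simp only [List.map_cons, List.map_nil, List.prod_cons, List.prod_nil, mul_one]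
    exact ih.trans (adj_mul_gen _ t).reachable

def rep : ℕ → List (Fin 3)
  | 0 => []
  | k + 1 => 0 :: 1 :: 2 :: rep k

lemma NF_abc_pow (k : ℕ) : (NF ((gen 0 * gen 1 * gen 2) ^ k)).1 = rep k := by
  induction k with
  | zero => rw [pow_zero]; exact NF_one
  | succ k ih =>
    rw [pow_succ']
    have h1 : (NF (gen 0 * gen 1 * gen 2 * (gen 0 * gen 1 * gen 2) ^ k)).1
        = sig 0 (sig 1 (sig 2 (rep k))) := by
      rw [NF_mul, ← ih]
      show red (NF (gen 0 * gen 1 * gen 2)).1 _ = _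
      have : (NF (gen 0 * gen 1 * gen 2)).1 = [0, 1, 2] := by
        rw [NF_mul, NF_mul, NF_gen, NF_gen, NF_gen]
        rfl
      rw [this]
      rfl
    rw [h1]
    have h2 : sig 2 (rep k) = 2 :: rep k := by
      cases k with
      | zero => rfl
      | succ k' => rfl
    rw [h2]
    rfl

lemma T_rep (k : ℕ) : 3 * k ≤ T (rep k) + 2 := by
  induction k with
  | zero => exact Nat.le_add_left _ _
  | succ k ih =>
    cases k with
    | zero => decide
    | succ k' =>
      have h3 : T (rep (k' + 1 + 1)) = 3 + T (rep (k' + 1)) := by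
        show T (0 :: 1 :: 2 :: 0 :: 1 :: 2 :: rep k') = _
        rw [T, T, T, if_pos (by decide), if_pos (by decide), if_pos (by decide)]
        show 1 + (1 + (1 + T (rep (k' + 1)))) = _
        omega
      omega


/-- The cone-off `Y` of `ℤ/2 ∗ ℤ/2 ∗ ℤ/2` over the cosets of the three subgroups
`⟨a₁,a₂⟩, ⟨a₂,a₃⟩, ⟨a₁,a₃⟩` is connected but has infinite diameter; in particular the
elements `(a₁a₂a₃)^k` are at unbounded distance from the identity. -/
theorem coneoff_of_Z2Z2Z2_unbounded :
    Y.Connected ∧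
    (∀ n : ℕ, ∃ g : W, n < Y.dist 1 g) ∧
    (∀ n : ℕ, ∃ k : ℕ, n < Y.dist 1 ((gen 0 * gen 1 * gen 2) ^ k)) := by
  have conn : Y.Connected := by
    rw [SimpleGraph.connected_iff]
    exact ⟨fun x y => (reach x).symm.trans (reach y), ⟨1⟩⟩
  have key : ∀ n : ℕ, n < Y.dist 1 ((gen 0 * gen 1 * gen 2) ^ (n + 1)) := by
    intro n
    obtain ⟨p, hp⟩ := conn.exists_walk_length_eq_dist 1 ((gen 0 * gen 1 * gen 2) ^ (n + 1))
    have h1 := walk_T p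
    rw [NF_one, NF_abc_pow] at h1
    have h2 := T_rep (n + 1)
    have h0 : T ([] : List (Fin 3)) = 0 := rfl
    omega
  exact ⟨conn, fun n => ⟨_, key n⟩, fun n => ⟨n + 1, key n⟩⟩
end

section
/- Let W = ℤ/2 ∗ ℤ/2 ∗ ℤ/2 be the free product of three copies of the cyclic group of order 2, with canonical generators a, b, c (the images of the nontrivial elements of the three factors). For every n ∈ ℕ, any expression of the element (abc)^n as a product of a finite list of elements each belonging to {a, b, c} has length at least 3n; that is, if l is a list of elements of W with every entry equal to a, b, or c and with product (abc)^n, then the length of l is at least 3n. -/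
open Monoid Monoid.CoprodI

namespace AbcAux

abbrev M : Fin 3 → Type := fun _ => Z2

noncomputable abbrev ℓ (x : W) : ℕ := (Word.equiv x).toList.length

lemma g_ne_one : (Multiplicative.ofAdd (1 : ZMod 2)) ≠ 1 := by decide

lemma equiv_prod (w : Word M) : Word.equiv (M := M) (Word.prod w) = w := by
  have := (Word.equiv (M := M)).right_inv w
  simpa [Word.equiv] using this

lemma rcons_length_le {i : Fin 3} (p : Word.Pair M i) :
    (Word.rcons p).toList.length ≤ p.tail.toList.length + 1 := by
  rw [Word.rcons]
  split
  · omega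
  · simp [Word.cons]

lemma tail_length_le (i : Fin 3) (w : Word M) :
    (Word.equivPair i w).tail.toList.length ≤ w.toList.length := by
  have h : Word.rcons (Word.equivPair i w) = w := (Word.equivPair i).left_inv w
  have h2 := congrArg (fun u : Word M => u.toList.length) h
  rw [Word.rcons] at h2
  split at h2
  · omega
  · simp [Word.cons] at h2; omega

lemma length_of_smul (i : Fin 3) (m : M i) (w : Word M) :
    ((Monoid.CoprodI.of m • w : Word M)).toList.length ≤ w.toList.length + 1 := by
  rw [Word.of_smul_def]
  exact le_trans (rcons_length_le _) (Nat.add_le_add_right (tail_length_le i w) 1)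

lemma ℓ_gen_mul (i : Fin 3) (x : W) : ℓ (gen i * x) ≤ ℓ x + 1 := by
  have h : Word.equiv (gen i * x) = Monoid.CoprodI.of (M := M) (i := i)
      (Multiplicative.ofAdd 1) • Word.equiv x := by
    show (gen i * x) • (Word.empty : Word M)
        = Monoid.CoprodI.of (M := M) (i := i) (Multiplicative.ofAdd 1)
          • (x • (Word.empty : Word M))
    rw [gen, mul_smul]
  rw [ℓ, h]
  exact length_of_smul i _ _

/-- The reduced word `(abc)^n`. -/
def abcList : ℕ → List (Σ i, M i)
  | 0 => []
  | n + 1 => ⟨0, Multiplicative.ofAdd 1⟩ :: ⟨1, Multiplicative.ofAdd 1⟩ ::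
      ⟨2, Multiplicative.ofAdd 1⟩ :: abcList n

lemma abcList_length (n : ℕ) : (abcList n).length = 3 * n := by
  induction n with
  | zero => rfl
  | succ n ih => simp [abcList, ih]; omega

lemma abcList_ne_one (n : ℕ) : ∀ l ∈ abcList n, l.snd ≠ 1 := by
  induction n with
  | zero => simp [abcList]
  | succ n ih =>
    intro l hl
    simp only [abcList, List.mem_cons] at hl
    rcases hl with rfl | rfl | rfl | h
    · exact g_ne_one
    · exact g_ne_one
    · exact g_ne_one
    · exact ih l h

lemma abcList_head (n : ℕ) :
    abcList n = [] ∨ ∃ t, abcList n = ⟨0, Multiplicative.ofAdd 1⟩ :: t := by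
  cases n with
  | zero => exact Or.inl rfl
  | succ n => exact Or.inr ⟨_, rfl⟩

lemma abcList_chain (n : ℕ) :
    (abcList n).Chain' (fun l l' => l.fst ≠ l'.fst) := by
  induction n with
  | zero => exact List.isChain_nil
  | succ n ih =>
    refine List.IsChain.cons_cons (by decide) (List.IsChain.cons_cons (by decide) ?_)
    rcases abcList_head n with h | ⟨t, h⟩
    · rw [h]; simp
    · rw [h] at ih ⊢
      exact List.IsChain.cons_cons (by decide) ih

/-- The reduced word for `(abc)^n`. -/
def abcWord (n : ℕ) : Word M where
  toList := abcList n
  ne_one := abcList_ne_one n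
  chain_ne := abcList_chain n

lemma abcList_prod (n : ℕ) :
    ((abcList n).map fun l => Monoid.CoprodI.of (M := M) l.snd).prod
      = (gen 0 * gen 1 * gen 2) ^ n := by
  induction n with
  | zero => simp [abcList]
  | succ n ih =>
    rw [pow_succ']
    simp only [abcList, List.map_cons, List.prod_cons, ih]
    simp [gen, mul_assoc]

lemma abcWord_prod (n : ℕ) : (abcWord n).prod = (gen 0 * gen 1 * gen 2) ^ n :=
  abcList_prod n

lemma ℓ_abc_pow (n : ℕ) : ℓ ((gen 0 * gen 1 * gen 2) ^ n) = 3 * n := by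
  rw [ℓ, ← abcWord_prod n, equiv_prod]
  exact abcList_length n

end AbcAux

/-- In `W = ℤ/2 ∗ ℤ/2 ∗ ℤ/2` with canonical generators `a, b, c`, any expression of
`(abc)^n` as a product of generators has length at least `3n`: the word `(abc)^n` is
geodesic with respect to `{a,b,c}`. -/
theorem abc_pow_geodesic (n : ℕ) (l : List W)
    (hl : ∀ x ∈ l, x = gen 0 ∨ x = gen 1 ∨ x = gen 2)
    (hprod : l.prod = (gen 0 * gen 1 * gen 2) ^ n) :
    3 * n ≤ l.length := by
  have key : ∀ (l : List W), (∀ x ∈ l, x = gen 0 ∨ x = gen 1 ∨ x = gen 2) →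
      AbcAux.ℓ l.prod ≤ l.length := by
    intro l
    induction l with
    | nil =>
      intro _
      simp only [List.prod_nil]
      have h1 : (1 : W) = Word.prod (Word.empty : Word AbcAux.M) :=
        (Word.prod_empty).symm
      rw [AbcAux.ℓ, h1, AbcAux.equiv_prod]
      rfl
    | cons a t ih =>
      intro h
      have ha := h a List.mem_cons_self
      have ht := fun x hx => h x (List.mem_cons_of_mem a hx)
      rw [List.prod_cons, List.length_cons]
      rcases ha with rfl | rfl | rfl
      · have := AbcAux.ℓ_gen_mul 0 t.prod; have := ih ht; omega
      · have := AbcAux.ℓ_gen_mul 1 t.prod; have := ih ht; omega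
      · have := AbcAux.ℓ_gen_mul 2 t.prod; have := ih ht; omega
  have h1 := key l hl
  rw [hprod, AbcAux.ℓ_abc_pow] at h1
  exact h1
end
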